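/- Let β₁ > 0 and let μ_{β₁} be the two-sided weighting function of the symmetric Preisach butterfly operator. For v ∈ [−β₁, β₁] define I(v) := ∬_{{(α,β) : v ≤ α ≤ β₁, −β₁ ≤ β ≤ v}} μ_{β₁}(α,β) dα dβ. Then I(v) = 2v(β₁ − |v|) for all v ∈ [−β₁, β₁]; in particular I(v) = 0 for v ∈ (−β₁, β₁) if and only if v = 0, so the butterfly loop of this Preisach operator under a periodic input with minimum −β₁ and maximum β₁ has exactly one interior crossover point, located at input value u_c = 0. -/

import Mathlib

/-!
STATEMENT 11: For the symmetric Preisach butterfly weighting μ_{β₁}, the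
crossover integral I(v) over the rectangle {v ≤ α ≤ β₁, −β₁ ≤ β ≤ v} equals
2v(β₁ − |v|) on [−β₁, β₁]; in particular the only interior crossover point of
the butterfly loop occurs at input value 0.
-/

open MeasureTheory

/-- The two-sided weighting function of the symmetric Preisach butterfly
operator. -/
noncomputable def butterflyWeight (β₁ : ℝ) : ℝ × ℝ → ℝ := fun p =>
  if -β₁ < p.2 ∧ p.2 ≤ p.1 ∧ p.1 < β₁ then
    (if p.1 ≤ -p.2 then (-1 : ℝ) else 1)
  else 0

/-- The crossover integral `I(v)` of the butterfly weighting over the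
rectangle `{(α,β) : v ≤ α ≤ β₁, −β₁ ≤ β ≤ v}`. -/
noncomputable def butterflyCrossoverIntegral (β₁ v : ℝ) : ℝ :=
  ∫ p in {p : ℝ × ℝ | v ≤ p.1 ∧ p.1 ≤ β₁ ∧ -β₁ ≤ p.2 ∧ p.2 ≤ v},
    butterflyWeight β₁ p

lemma measurable_butterflyWeight (β₁ : ℝ) : Measurable (butterflyWeight β₁) := by
  unfold butterflyWeight
  refine Measurable.ite ?_ (Measurable.ite ?_ measurable_const measurable_const)
    measurable_const
  · exact (measurableSet_lt measurable_const measurable_snd).inter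
      ((measurableSet_le measurable_snd measurable_fst).inter
        (measurableSet_lt measurable_fst measurable_const))
  · exact measurableSet_le measurable_fst measurable_snd.neg

lemma norm_butterflyWeight_le (β₁ : ℝ) (p : ℝ × ℝ) : ‖butterflyWeight β₁ p‖ ≤ 1 := by
  unfold butterflyWeight
  split_ifs <;> simp

lemma bw_slice_int (β₁ α a b : ℝ) :
    IntegrableOn (fun β => butterflyWeight β₁ (α, β)) (Set.Ioc a b) := by
  apply Measure.integrableOn_of_bounded (M := 1)
  · simp [Real.volume_Ioc]
  · exact ((measurable_butterflyWeight β₁).comp measurable_prodMk_left).aestronglyMeasurable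
  · exact Filter.Eventually.of_forall fun β => norm_butterflyWeight_le β₁ _

lemma weight_eq_simple (β₁ : ℝ) {α β : ℝ} (h1 : -β₁ < β) (h2 : β ≤ α) (h3 : α < β₁) :
    butterflyWeight β₁ (α, β) = if β ≤ -α then -1 else 1 := by
  unfold butterflyWeight
  rw [if_pos ⟨h1, h2, h3⟩]
  by_cases h : β ≤ -α
  · rw [if_pos (by linarith), if_pos h]
  · rw [if_neg (by intro hc; exact h (by linarith)), if_neg h]

lemma inner_integral (β₁ v α : ℝ) (hβ₁ : 0 < β₁) (hv1 : -β₁ ≤ v)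
    (hα1 : v ≤ α) (hα2 : α < β₁) :
    ∫ β in Set.Icc (-β₁) v, butterflyWeight β₁ (α, β)
      = if α ≤ -v then -(v + β₁) else 2 * α + v - β₁ := by
  rw [MeasureTheory.integral_Icc_eq_integral_Ioc]
  by_cases h : α ≤ -v
  · rw [if_pos h,
      setIntegral_congr_fun measurableSet_Ioc (g := fun _ => (-1 : ℝ))
        (fun β hβ => by
          rw [weight_eq_simple β₁ hβ.1 (le_trans hβ.2 hα1) hα2,
            if_pos (by linarith [hβ.2])]),
      setIntegral_const, measureReal_def, Real.volume_Ioc, ENNReal.toReal_ofReal (by linarith),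
      smul_eq_mul]
    ring
  · rw [if_neg h]
    have hαv : -v < α := not_le.mp h
    have h1 : -β₁ ≤ -α := by linarith
    have h2 : -α ≤ v := by linarith
    rw [← Set.Ioc_union_Ioc_eq_Ioc h1 h2,
      setIntegral_union (Set.Ioc_disjoint_Ioc_of_le le_rfl) measurableSet_Ioc
        (bw_slice_int β₁ α _ _) (bw_slice_int β₁ α _ _)]
    have e1 : ∫ β in Set.Ioc (-β₁) (-α), butterflyWeight β₁ (α, β)
        = ∫ _ in Set.Ioc (-β₁) (-α), (-1 : ℝ) :=
      setIntegral_congr_fun measurableSet_Ioc fun β hβ => by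
        rw [weight_eq_simple β₁ hβ.1 (by linarith [hβ.2]) hα2, if_pos hβ.2]
    have e2 : ∫ β in Set.Ioc (-α) v, butterflyWeight β₁ (α, β)
        = ∫ _ in Set.Ioc (-α) v, (1 : ℝ) :=
      setIntegral_congr_fun measurableSet_Ioc fun β hβ => by
        rw [weight_eq_simple β₁ (by linarith [hβ.1]) (le_trans hβ.2 hα1) hα2,
          if_neg (not_le.mpr hβ.1)]
    rw [e1, e2, setIntegral_const, setIntegral_const, measureReal_def, measureReal_def,
      Real.volume_Ioc, Real.volume_Ioc,
      ENNReal.toReal_ofReal (by linarith), ENNReal.toReal_ofReal (by linarith),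
      smul_eq_mul, smul_eq_mul]
    ring

lemma main_formula (β₁ : ℝ) (hβ₁ : 0 < β₁) (v : ℝ) (hv1 : -β₁ ≤ v) (hv2 : v ≤ β₁) :
    butterflyCrossoverIntegral β₁ v = 2 * v * (β₁ - |v|) := by
  have hset : {p : ℝ × ℝ | v ≤ p.1 ∧ p.1 ≤ β₁ ∧ -β₁ ≤ p.2 ∧ p.2 ≤ v}
      = Set.Icc v β₁ ×ˢ Set.Icc (-β₁) v := by
    ext p
    simp only [Set.mem_setOf_eq, Set.mem_prod, Set.mem_Icc]
    tauto
  have hint : IntegrableOn (butterflyWeight β₁)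
      (Set.Icc v β₁ ×ˢ Set.Icc (-β₁) v) (volume.prod volume) := by
    apply Measure.integrableOn_of_bounded (M := 1)
    · rw [← Measure.volume_eq_prod]
      exact ((isCompact_Icc.prod isCompact_Icc).measure_lt_top).ne
    · rw [← Measure.volume_eq_prod]
      exact (measurable_butterflyWeight β₁).aestronglyMeasurable
    · exact Filter.Eventually.of_forall fun p => norm_butterflyWeight_le β₁ p
  rw [butterflyCrossoverIntegral, hset, Measure.volume_eq_prod,
    setIntegral_prod _ hint]
  set F : ℝ → ℝ := fun α => if α ≤ -v then -(v + β₁) else 2 * α + v - β₁ with hF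
  have hae : ∀ᵐ α : ℝ, α ≠ β₁ := by
    rw [Filter.eventually_iff, mem_ae_iff]
    simp [(by ext x; simp : {x : ℝ | x ≠ β₁}ᶜ = {β₁})]
  have h1 : ∫ α in Set.Icc v β₁, ∫ β in Set.Icc (-β₁) v, butterflyWeight β₁ (α, β)
      = ∫ α in Set.Icc v β₁, F α := by
    apply setIntegral_congr_ae measurableSet_Icc
    filter_upwards [hae] with α hne hmem
    exact inner_integral β₁ v α hβ₁ hv1 hmem.1 (lt_of_le_of_ne hmem.2 hne)
  rw [h1, MeasureTheory.integral_Icc_eq_integral_Ioc,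
    ← intervalIntegral.integral_of_le hv2]
  have hFmono : Monotone F := by
    intro a b hab
    simp only [hF]
    split_ifs <;> linarith
  have hInt : ∀ a b : ℝ, IntervalIntegrable F volume a b := fun a b =>
    (hFmono.monotoneOn _).intervalIntegrable
  have haff : ∀ a b : ℝ, (∫ x in a..b, (2 * x + (v - β₁)))
      = b ^ 2 - a ^ 2 + (v - β₁) * (b - a) := by
    intro a b
    have hi : IntervalIntegrable (fun x : ℝ => 2 * x) volume a b :=
      (continuous_const.mul continuous_id).intervalIntegrable _ _
    rw [intervalIntegral.integral_add hi intervalIntegrable_const,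
      intervalIntegral.integral_const_mul, integral_id, intervalIntegral.integral_const,
      smul_eq_mul]
    ring
  rcases le_or_gt v 0 with hv0 | hv0
  · have hnv : -v ≤ β₁ := by linarith
    rw [← intervalIntegral.integral_add_adjacent_intervals (b := -v) (hInt v (-v))
        (hInt (-v) β₁)]
    have e1 : (∫ x in v..(-v), F x) = ∫ x in v..(-v), (-(v + β₁) : ℝ) := by
      apply intervalIntegral.integral_congr
      intro x hx
      rw [Set.uIcc_of_le (by linarith)] at hx
      simp only [hF]
      rw [if_pos hx.2]
    have e2 : (∫ x in (-v)..β₁, F x) = ∫ x in (-v)..β₁, (2 * x + (v - β₁)) := by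
      apply intervalIntegral.integral_congr
      intro x hx
      rw [Set.uIcc_of_le hnv] at hx
      simp only [hF]
      by_cases hx2 : x ≤ -v
      · rw [if_pos hx2]
        have : x = -v := le_antisymm hx2 hx.1
        rw [this]; ring
      · rw [if_neg hx2]; ring
    rw [e1, e2, haff, intervalIntegral.integral_const, smul_eq_mul,
      abs_of_nonpos hv0]
    ring
  · have e2 : (∫ x in v..β₁, F x) = ∫ x in v..β₁, (2 * x + (v - β₁)) := by
      apply intervalIntegral.integral_congr
      intro x hx
      rw [Set.uIcc_of_le hv2] at hx
      simp only [hF]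
      rw [if_neg (by linarith [hx.1])]
      ring
    rw [e2, haff, abs_of_pos hv0]
    ring

theorem butterfly_crossover_integral (β₁ : ℝ) (hβ₁ : 0 < β₁) :
    (∀ v ∈ Set.Icc (-β₁) β₁,
      butterflyCrossoverIntegral β₁ v = 2 * v * (β₁ - |v|)) ∧
    (∀ v ∈ Set.Ioo (-β₁) β₁,
      (butterflyCrossoverIntegral β₁ v = 0 ↔ v = 0)) := by
  constructor
  · exact fun v hv => main_formula β₁ hβ₁ v hv.1 hv.2
  · intro v hv
    rw [main_formula β₁ hβ₁ v hv.1.le hv.2.le]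
    have habs : |v| < β₁ := abs_lt.mpr ⟨hv.1, hv.2⟩
    constructor
    · intro h
      rcases mul_eq_zero.mp h with h' | h'
      · rcases mul_eq_zero.mp h' with h'' | h''
        · norm_num at h''
        · exact h''
      · linarith
    · intro h; simp [h]
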